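/- Let q_1, …, q_K ∈ ℝ^τ be unit-norm vectors, let z : Fin K → ℝ satisfy z_k > 0 for all k, define s_k = Σ_{j=1}^{K} z_j ⟨q_k, q_j⟩², and suppose s_k > z_k for all k. Let γ : Fin K → ℝ with γ_k > 0, and suppose the asymptotic SINR lower bound φ̄_k = z_k/(s_k − z_k) satisfies φ̄_k ≥ γ_k for every k. Then (K : ℝ)² ≤ τ · Σ_{k=1}^{K} (1 + γ_k)/γ_k. -/

import Mathlib

/-- **User load upper bound (eq. (14)).** For unit-norm pilot sequences `q k ∈ ℝ^τ`,
positive normalized powers `z`, `s k = ∑ j z j ⟪q k, q j⟫²` with `s k > z k`, and positive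
SINR requirements `γ` satisfied by the asymptotic SINR lower bounds
`φ̄ k = z k / (s k − z k) ≥ γ k`, the number of users obeys
`K² ≤ τ · ∑ k (1 + γ k)/γ k`. -/
theorem user_load_upper_bound (K τ : ℕ)
    (q : Fin K → EuclideanSpace ℝ (Fin τ)) (hq : ∀ k, ‖q k‖ = 1)
    (z : Fin K → ℝ) (hz : ∀ k, 0 < z k)
    (s : Fin K → ℝ) (hs : ∀ k, s k = ∑ j : Fin K, z j * (inner ℝ (q k) (q j) : ℝ) ^ 2)
    (hsz : ∀ k, z k < s k)
    (γ : Fin K → ℝ) (hγ : ∀ k, 0 < γ k)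
    (hreq : ∀ k, γ k ≤ z k / (s k - z k)) :
    (K : ℝ) ^ 2 ≤ (τ : ℝ) * ∑ k : Fin K, (1 + γ k) / γ k := by
  set ρ : Fin K → Fin K → ℝ := fun k j => (inner ℝ (q k) (q j) : ℝ) with hρdef
  have hinner : ∀ x y : EuclideanSpace ℝ (Fin τ), (inner ℝ x y : ℝ) = ∑ i, x i * y i := by
    intro x y; simp [PiLp.inner_apply, RCLike.inner_apply, conj_trivial]; exact Finset.sum_congr rfl fun i _ => mul_comm _ _
  have hρsymm : ∀ k j, ρ k j = ρ j k := fun k j => real_inner_comm _ _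
  -- Step 1
  have h1 : ∀ k : Fin K, s k / z k ≤ (1 + γ k) / γ k := by
    intro k
    have hd : 0 < s k - z k := sub_pos.2 (hsz k)
    have h := hreq k
    rw [le_div_iff₀ hd] at h
    rw [div_le_div_iff₀ (hz k) (hγ k)]
    nlinarith [hγ k, hz k]
  have hsum1 : ∑ k, s k / z k ≤ ∑ k, (1 + γ k) / γ k :=
    Finset.sum_le_sum fun k _ => h1 k
  -- Step 2
  have h2 : ∑ k, ∑ j, (ρ k j) ^ 2 ≤ ∑ k, s k / z k := by
    have e1 : ∀ k, s k / z k = ∑ j, (z j / z k) * (ρ k j) ^ 2 := by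
      intro k
      rw [hs k, Finset.sum_div]
      refine Finset.sum_congr rfl fun j _ => ?_
      rw [hρdef]; ring
    have e2 : ∑ k, ∑ j, (z j / z k) * (ρ k j) ^ 2
        = ∑ k, ∑ j, (z k / z j) * (ρ k j) ^ 2 := by
      rw [Finset.sum_comm]
      refine Finset.sum_congr rfl fun k _ => Finset.sum_congr rfl fun j _ => ?_
      rw [hρsymm j k]
    have key : ∑ k, ∑ j, (2 : ℝ) * (ρ k j) ^ 2
        ≤ ∑ k, ∑ j, ((z j / z k) + (z k / z j)) * (ρ k j) ^ 2 := by
      refine Finset.sum_le_sum fun k _ => Finset.sum_le_sum fun j _ => ?_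
      have hzk := hz k; have hzj := hz j
      have hsq : (0:ℝ) ≤ (ρ k j)^2 := sq_nonneg _
      have h2' : (2:ℝ) ≤ z j / z k + z k / z j := by
        rw [div_add_div _ _ (ne_of_gt hzk) (ne_of_gt hzj), le_div_iff₀ (by positivity)]
        nlinarith [sq_nonneg (z j - z k)]
      nlinarith
    simp_rw [e1]
    have expand : ∑ k, ∑ j, ((z j / z k) + (z k / z j)) * (ρ k j) ^ 2
        = 2 * ∑ k, ∑ j, (z j / z k) * (ρ k j) ^ 2 := by
      rw [two_mul]
      nth_rewrite 2 [e2]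
      simp_rw [← Finset.sum_add_distrib]
      refine Finset.sum_congr rfl fun k _ => Finset.sum_congr rfl fun j _ => ?_
      ring
    have : 2 * ∑ k, ∑ j, (ρ k j) ^ 2 ≤ 2 * ∑ k, ∑ j, (z j / z k) * (ρ k j) ^ 2 := by
      rw [← expand]
      calc 2 * ∑ k, ∑ j, (ρ k j) ^ 2 = ∑ k, ∑ j, (2:ℝ) * (ρ k j) ^ 2 := by
            simp_rw [Finset.mul_sum]
        _ ≤ _ := key
    linarith
  -- Step 3: Welch-type bound
  set M : Fin τ → Fin τ → ℝ := fun i i' => ∑ k, q k i * q k i' with hMdef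
  have hKtr : (K : ℝ) = ∑ i, M i i := by
    have : ∑ i, M i i = ∑ k : Fin K, ∑ i, q k i * q k i := by
      rw [hMdef]; exact Finset.sum_comm
    rw [this]
    have : ∀ k, ∑ i, q k i * q k i = 1 := by
      intro k
      have := hinner (q k) (q k)
      rw [real_inner_self_eq_norm_sq, hq k] at this
      simpa using this.symm
    simp [this]
  have hCS : (∑ i, M i i) ^ 2 ≤ (τ : ℝ) * ∑ i, (M i i) ^ 2 := by
    have := Finset.sum_mul_sq_le_sq_mul_sq Finset.univ (fun _ : Fin τ => (1:ℝ))
      (fun i => M i i)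
    simpa using this
  have hdiag : ∑ i, (M i i) ^ 2 ≤ ∑ i, ∑ i', (M i i') ^ 2 := by
    refine Finset.sum_le_sum fun i _ => ?_
    exact Finset.single_le_sum (fun i' _ => sq_nonneg (M i i')) (Finset.mem_univ i)
  have hfro : ∑ i, ∑ i', (M i i') ^ 2 = ∑ k, ∑ l, (ρ k l) ^ 2 := by
    have step : ∀ i i', (M i i') ^ 2
        = ∑ k, ∑ l, (q k i * q l i) * (q k i' * q l i') := by
      intro i i'
      rw [sq, hMdef, Finset.sum_mul_sum]
      exact Finset.sum_congr rfl fun k _ => Finset.sum_congr rfl fun l _ => by ring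
    have swap : ∀ f : Fin τ → Fin τ → Fin K → Fin K → ℝ,
        ∑ i, ∑ i', ∑ k, ∑ l, f i i' k l = ∑ k, ∑ l, ∑ i, ∑ i', f i i' k l := by
      intro f
      calc ∑ i, ∑ i', ∑ k, ∑ l, f i i' k l
          = ∑ i, ∑ k, ∑ i', ∑ l, f i i' k l := by
            refine Finset.sum_congr rfl fun i _ => ?_; rw [Finset.sum_comm]
        _ = ∑ k, ∑ i, ∑ i', ∑ l, f i i' k l := by rw [Finset.sum_comm]
        _ = ∑ k, ∑ i, ∑ l, ∑ i', f i i' k l := by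
            refine Finset.sum_congr rfl fun k _ => Finset.sum_congr rfl fun i _ => ?_
            rw [Finset.sum_comm]
        _ = ∑ k, ∑ l, ∑ i, ∑ i', f i i' k l := by
            refine Finset.sum_congr rfl fun k _ => ?_; rw [Finset.sum_comm]
    calc ∑ i, ∑ i', (M i i') ^ 2
        = ∑ i, ∑ i', ∑ k, ∑ l, (q k i * q l i) * (q k i' * q l i') := by simp_rw [step]
      _ = ∑ k, ∑ l, ∑ i, ∑ i', (q k i * q l i) * (q k i' * q l i') := swap _
      _ = ∑ k, ∑ l, (ρ k l) ^ 2 := by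
          refine Finset.sum_congr rfl fun k _ => Finset.sum_congr rfl fun l _ => ?_
          rw [hρdef]; simp only [hinner]; rw [sq, Finset.sum_mul_sum]
  have h3 : (K : ℝ) ^ 2 ≤ (τ : ℝ) * ∑ k, ∑ l, (ρ k l) ^ 2 := by
    rw [hKtr]
    calc (∑ i, M i i)^2 ≤ (τ : ℝ) * ∑ i, (M i i)^2 := hCS
      _ ≤ (τ : ℝ) * ∑ i, ∑ i', (M i i')^2 := by
          exact mul_le_mul_of_nonneg_left hdiag (Nat.cast_nonneg τ)
      _ = (τ : ℝ) * ∑ k, ∑ l, (ρ k l)^2 := by rw [hfro]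
  calc (K : ℝ)^2 ≤ (τ : ℝ) * ∑ k, ∑ l, (ρ k l)^2 := h3
    _ ≤ (τ : ℝ) * ∑ k, s k / z k :=
        mul_le_mul_of_nonneg_left h2 (Nat.cast_nonneg τ)
    _ ≤ (τ : ℝ) * ∑ k, (1 + γ k) / γ k :=
        mul_le_mul_of_nonneg_left hsum1 (Nat.cast_nonneg τ)
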